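/- Let X be a finite set with |X| = n, f : X → ℝ, and let π₀ be the uniform distribution on X. Define π_g(x) ∝ exp(-g·f(x)). Then the Shannon entropy H(π_g) = -∑_x π_g(x) log π_g(x) is monotonically non-increasing in g ≥ 0. -/

import Mathlib

open Real BigOperators Finset Filter

def IsPMF {X : Type*} [Fintype X] (p : X → ℝ) : Prop :=
  (∀ x, 0 ≤ p x) ∧ ∑ x, p x = 1

noncomputable def expVal {X : Type*} [Fintype X] (p f : X → ℝ) : ℝ := ∑ x, p x * f x

noncomputable def varVal {X : Type*} [Fintype X] (p f : X → ℝ) : ℝ :=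
  expVal p (fun x => f x ^ 2) - (expVal p f) ^ 2

noncomputable def covVal {X : Type*} [Fintype X] (p u v : X → ℝ) : ℝ :=
  expVal p (fun x => u x * v x) - expVal p u * expVal p v

noncomputable def klDiv' {X : Type*} [Fintype X] (p q : X → ℝ) : ℝ :=
  ∑ x, p x * Real.log (p x / q x)

noncomputable def entropyF {X : Type*} [Fintype X] (p : X → ℝ) : ℝ :=
  -∑ x, p x * Real.log (p x)

noncomputable def tilt {X : Type*} [Fintype X] (π₀ f : X → ℝ) (g : ℝ) (x : X) : ℝ :=
  π₀ x * Real.exp (-g * f x) / ∑ y, π₀ y * Real.exp (-g * f y)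

section Aux

variable {X : Type*} [Fintype X] [Nonempty X] (f : X → ℝ)

noncomputable def Zf (f : X → ℝ) (g : ℝ) : ℝ := ∑ x, Real.exp (-g * f x)

noncomputable def Sf (f : X → ℝ) (g : ℝ) : ℝ := ∑ x, f x * Real.exp (-g * f x)

lemma Zf_pos (g : ℝ) : 0 < Zf f g :=
  Finset.sum_pos (fun x _ => Real.exp_pos _) Finset.univ_nonempty

lemma tilt_uniform_eq (g : ℝ) (x : X) :
    tilt (fun _ : X => ((Fintype.card X : ℝ))⁻¹) f g x = Real.exp (-g * f x) / Zf f g := by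
  have hc : (0:ℝ) < ((Fintype.card X : ℝ))⁻¹ := by
    have : 0 < Fintype.card X := Fintype.card_pos
    positivity
  unfold tilt Zf
  rw [← Finset.mul_sum, mul_div_mul_left _ _ (ne_of_gt hc)]

lemma entropy_tilt_eq (g : ℝ) :
    (-∑ x, tilt (fun _ : X => ((Fintype.card X : ℝ))⁻¹) f g x *
        Real.log (tilt (fun _ : X => ((Fintype.card X : ℝ))⁻¹) f g x))
      = Real.log (Zf f g) + g * (Sf f g / Zf f g) := by
  have hZ := Zf_pos f g
  have h1 : ∀ x : X, tilt (fun _ : X => ((Fintype.card X : ℝ))⁻¹) f g x *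
      Real.log (tilt (fun _ : X => ((Fintype.card X : ℝ))⁻¹) f g x)
      = -g * (f x * Real.exp (-g * f x)) / Zf f g
        - Real.log (Zf f g) * (Real.exp (-g * f x) / Zf f g) := by
    intro x
    rw [tilt_uniform_eq, Real.log_div (Real.exp_ne_zero _) (ne_of_gt hZ), Real.log_exp]
    field_simp
  rw [Finset.sum_congr rfl (fun x _ => h1 x), Finset.sum_sub_distrib]
  have h2 : ∑ x : X, -g * (f x * Real.exp (-g * f x)) / Zf f g = -g * (Sf f g / Zf f g) := by
    rw [Sf, ← Finset.sum_div, ← Finset.mul_sum, mul_div_assoc]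
  have h3 : ∑ x : X, Real.log (Zf f g) * (Real.exp (-g * f x) / Zf f g)
      = Real.log (Zf f g) := by
    rw [← Finset.mul_sum, ← Finset.sum_div, ← Zf, div_self (ne_of_gt hZ), mul_one]
  rw [h2, h3]; ring

lemma gibbs_claim (g₁ g₂ : ℝ) :
    (g₂ - g₁) * (Sf f g₂ / Zf f g₂) + Real.log (Zf f g₂) ≤ Real.log (Zf f g₁) := by
  have hZ₁ := Zf_pos f g₁
  have hZ₂ := Zf_pos f g₂
  set p₁ : X → ℝ := fun x => Real.exp (-g₁ * f x) / Zf f g₁ with hp₁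
  set p₂ : X → ℝ := fun x => Real.exp (-g₂ * f x) / Zf f g₂ with hp₂
  have hp₁pos : ∀ x, 0 < p₁ x := fun x => div_pos (Real.exp_pos _) hZ₁
  have hp₂pos : ∀ x, 0 < p₂ x := fun x => div_pos (Real.exp_pos _) hZ₂
  have key : ∀ x : X, p₂ x * ((g₂ - g₁) * f x + Real.log (Zf f g₂) - Real.log (Zf f g₁))
      ≤ p₁ x - p₂ x := by
    intro x
    have hlog : Real.log (p₁ x / p₂ x)
        = (g₂ - g₁) * f x + Real.log (Zf f g₂) - Real.log (Zf f g₁) := by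
      rw [Real.log_div (ne_of_gt (hp₁pos x)) (ne_of_gt (hp₂pos x)), hp₁, hp₂,
        Real.log_div (Real.exp_ne_zero _) (ne_of_gt hZ₁),
        Real.log_div (Real.exp_ne_zero _) (ne_of_gt hZ₂), Real.log_exp, Real.log_exp]
      ring
    have ht : Real.log (p₁ x / p₂ x) ≤ p₁ x / p₂ x - 1 :=
      Real.log_le_sub_one_of_pos (div_pos (hp₁pos x) (hp₂pos x))
    rw [← hlog]
    calc p₂ x * Real.log (p₁ x / p₂ x) ≤ p₂ x * (p₁ x / p₂ x - 1) :=
          mul_le_mul_of_nonneg_left ht (le_of_lt (hp₂pos x))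
      _ = p₁ x - p₂ x := by field_simp [ne_of_gt (hp₂pos x)]
  have hsum := Finset.sum_le_sum (fun x (_ : x ∈ Finset.univ) => key x)
  have hsump : ∀ g (hZ : 0 < Zf f g), ∑ x : X, Real.exp (-g * f x) / Zf f g = 1 := by
    intro g hZ
    rw [← Finset.sum_div, ← Zf, div_self (ne_of_gt hZ)]
  have h1 : ∑ x : X, (p₁ x - p₂ x) = 0 := by
    rw [Finset.sum_sub_distrib, hp₁, hp₂, hsump g₁ hZ₁, hsump g₂ hZ₂]; ring
  have h2 : ∑ x : X, p₂ x * ((g₂ - g₁) * f x + Real.log (Zf f g₂) - Real.log (Zf f g₁))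
      = (g₂ - g₁) * (Sf f g₂ / Zf f g₂)
        + (Real.log (Zf f g₂) - Real.log (Zf f g₁)) := by
    have : ∀ x : X, p₂ x * ((g₂ - g₁) * f x + Real.log (Zf f g₂) - Real.log (Zf f g₁))
        = (g₂ - g₁) * (f x * Real.exp (-g₂ * f x) / Zf f g₂)
          + (Real.log (Zf f g₂) - Real.log (Zf f g₁)) * (Real.exp (-g₂ * f x) / Zf f g₂) := by
      intro x; rw [hp₂]; field_simp; ring
    rw [Finset.sum_congr rfl (fun x _ => this x), Finset.sum_add_distrib,
      ← Finset.mul_sum, ← Finset.mul_sum, hsump g₂ hZ₂, mul_one]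
    congr 2
    rw [Sf, Finset.sum_div]
  rw [h1, h2] at hsum
  linarith

lemma mu_antitone (g₁ g₂ : ℝ) (h : g₁ ≤ g₂) :
    Sf f g₂ / Zf f g₂ ≤ Sf f g₁ / Zf f g₁ := by
  rw [div_le_div_iff₀ (Zf_pos f g₂) (Zf_pos f g₁)]
  set T : X → X → ℝ := fun x y =>
    f x * Real.exp (-g₁ * f x) * Real.exp (-g₂ * f y)
      - f x * Real.exp (-g₂ * f x) * Real.exp (-g₁ * f y) with hT
  have key : ∀ x y : X, 0 ≤ T x y + T y x := by
    intro x y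
    have hTsum : T x y + T y x
        = (f x - f y) * (Real.exp (-g₁ * f x) * Real.exp (-g₂ * f y)
            - Real.exp (-g₂ * f x) * Real.exp (-g₁ * f y)) := by
      rw [hT]; ring
    rw [hTsum, ← Real.exp_add, ← Real.exp_add]
    rcases le_total (f x) (f y) with hab | hab
    · have hle : -g₁ * f x + -g₂ * f y ≤ -g₂ * f x + -g₁ * f y := by nlinarith
      have := Real.exp_le_exp.mpr hle
      nlinarith
    · apply mul_nonneg
      · linarith
      · have : -g₂ * f x + -g₁ * f y ≤ -g₁ * f x + -g₂ * f y := by nlinarith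
        have := Real.exp_le_exp.mpr this
        linarith
  have hdiff : Sf f g₁ * Zf f g₂ - Sf f g₂ * Zf f g₁ = ∑ x : X, ∑ y : X, T x y := by
    rw [Sf, Sf, Zf, Zf, Finset.sum_mul_sum, Finset.sum_mul_sum,
      ← Finset.sum_sub_distrib]
    congr 1; ext x
    rw [← Finset.sum_sub_distrib]
  have hcomm : ∑ x : X, ∑ y : X, T y x = ∑ x : X, ∑ y : X, T x y := Finset.sum_comm
  have h2 : 0 ≤ ∑ x : X, ∑ y : X, (T x y + T y x) :=
    Finset.sum_nonneg fun x _ => Finset.sum_nonneg fun y _ => key x y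
  have h3 : ∑ x : X, ∑ y : X, (T x y + T y x)
      = (∑ x : X, ∑ y : X, T x y) + ∑ x : X, ∑ y : X, T y x := by
    rw [← Finset.sum_add_distrib]
    congr 1; ext x
    rw [← Finset.sum_add_distrib]
  rw [h3, hcomm] at h2
  nlinarith [hdiff, h2]

end Aux

/-- for uniform prior, the entropy of the tilted distribution is
non-increasing in g ≥ 0. -/
theorem tilt_entropy_antitone_of_uniform {X : Type*} [Fintype X] [Nonempty X]
    (f : X → ℝ) :
    ∀ g₁ g₂ : ℝ, 0 ≤ g₁ → g₁ ≤ g₂ →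
      entropyF (tilt (fun _ : X => ((Fintype.card X : ℝ))⁻¹) f g₂) ≤
      entropyF (tilt (fun _ : X => ((Fintype.card X : ℝ))⁻¹) f g₁) := by
  intro g₁ g₂ hg₁ hg
  show (-∑ x, tilt (fun _ : X => ((Fintype.card X : ℝ))⁻¹) f g₂ x *
        Real.log (tilt (fun _ : X => ((Fintype.card X : ℝ))⁻¹) f g₂ x)) ≤
      (-∑ x, tilt (fun _ : X => ((Fintype.card X : ℝ))⁻¹) f g₁ x *
        Real.log (tilt (fun _ : X => ((Fintype.card X : ℝ))⁻¹) f g₁ x))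
  rw [entropy_tilt_eq, entropy_tilt_eq]
  have hA := gibbs_claim f g₁ g₂
  have hB := mu_antitone f g₁ g₂ hg
  have hC : g₁ * (Sf f g₂ / Zf f g₂) ≤ g₁ * (Sf f g₁ / Zf f g₁) :=
    mul_le_mul_of_nonneg_left hB hg₁
  linarith
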